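/- For all multi-indices m, k ∈ ℕ₀ⁿ, the quantity c(n,m+k)/(c(n,m)·c(n,k)) ≤ (n-1)! · 2^(n+|m|+|k|-1), where c(n,k) = (n+|k|-1)!/((n-1)!·k!) with k! = k₁!···kₙ! and |k| = k₁+...+kₙ. -/

import Mathlib

open Finset

/-- The constant `c(n,k) = (n+|k|-1)!/((n-1)! k!)` from the Cauchy estimates for
monogenic functions, as a real number. -/
noncomputable def cnk (n : ℕ) (k : Fin n → ℕ) : ℝ :=
  (Nat.factorial (n + (∑ i, k i) - 1) : ℝ) /
    ((Nat.factorial (n - 1) : ℝ) * (∏ i, Nat.factorial (k i) : ℕ))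

lemma choose_le_two_pow' (N j : ℕ) : N.choose j ≤ 2 ^ N := by
  rcases le_or_gt j N with h | h
  · calc N.choose j ≤ ∑ i ∈ range (N + 1), N.choose i :=
          Finset.single_le_sum (fun i _ => Nat.zero_le _) (mem_range.2 (by omega))
    _ = 2 ^ N := Nat.sum_range_choose N
  · simp [Nat.choose_eq_zero_of_lt h]

lemma key_fact (n a b : ℕ) (hn : 1 ≤ n) :
    Nat.factorial (n + a + b - 1) ≤
      2 ^ (n + a + b - 1) * Nat.factorial (n + a - 1) * Nat.factorial (n + b - 1) := by
  have h1 : n + a + b - 1 = (n + a - 1) + b := by omega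
  calc Nat.factorial (n + a + b - 1) = Nat.factorial ((n + a - 1) + b) := by rw [h1]
    _ = ((n + a - 1) + b).choose b * (n + a - 1).factorial * b.factorial :=
        (Nat.add_choose_mul_factorial_mul_factorial _ _).symm
    _ ≤ 2 ^ (n + a + b - 1) * (n + a - 1).factorial * (n + b - 1).factorial := by
        refine Nat.mul_le_mul (Nat.mul_le_mul ?_ le_rfl) (Nat.factorial_le (by omega))
        rw [← h1]; exact choose_le_two_pow' _ _

lemma prod_fact_le (n : ℕ) (m k : Fin n → ℕ) :
    (∏ i, Nat.factorial (m i)) * (∏ i, Nat.factorial (k i)) ≤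
      ∏ i, Nat.factorial ((m + k) i) := by
  rw [← Finset.prod_mul_distrib]
  refine Finset.prod_le_prod' fun i _ => ?_
  exact Nat.le_of_dvd (Nat.factorial_pos _)
    (Nat.factorial_mul_factorial_dvd_factorial_add _ _)

/-- Submultiplicativity-type estimate: `c(n,m+k)/(c(n,m) c(n,k)) ≤ (n-1)! 2^(n+|m|+|k|-1)`. -/
theorem cnk_submultiplicative (n : ℕ) (hn : 1 ≤ n) (m k : Fin n → ℕ) :
    cnk n (m + k) / (cnk n m * cnk n k)
      ≤ (Nat.factorial (n - 1) : ℝ) * 2 ^ (n + (∑ i, m i) + (∑ i, k i) - 1) := by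
  set a := ∑ i, m i with ha
  set b := ∑ i, k i with hb
  have hsum : ∑ i, (m + k) i = a + b := by
    simp [ha, hb, Finset.sum_add_distrib]
  set e := n + a + b - 1 with he
  -- natural number inequality
  have hnat : Nat.factorial (n + (a + b) - 1) *
      ((∏ i, Nat.factorial (m i)) * (∏ i, Nat.factorial (k i))) ≤
      2 ^ e * Nat.factorial (n + a - 1) * Nat.factorial (n + b - 1) *
        (∏ i, Nat.factorial ((m + k) i)) := by
    have h1 := key_fact n a b hn
    have h2 := prod_fact_le n m k
    have h3 : n + (a + b) - 1 = n + a + b - 1 := by omega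
    rw [h3]
    exact Nat.mul_le_mul h1 h2
  -- positivity facts
  have hF0 : (0:ℝ) < Nat.factorial (n - 1) := by positivity
  have hF2 : (0:ℝ) < Nat.factorial (n + a - 1) := by positivity
  have hF3 : (0:ℝ) < Nat.factorial (n + b - 1) := by positivity
  have hPm : (0:ℝ) < ((∏ i, Nat.factorial (m i) : ℕ) : ℝ) := by
    have : 0 < ∏ i, Nat.factorial (m i) :=
      Finset.prod_pos fun i _ => Nat.factorial_pos _
    exact_mod_cast this
  have hPk : (0:ℝ) < ((∏ i, Nat.factorial (k i) : ℕ) : ℝ) := by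
    have : 0 < ∏ i, Nat.factorial (k i) :=
      Finset.prod_pos fun i _ => Nat.factorial_pos _
    exact_mod_cast this
  have hP : (0:ℝ) < ((∏ i, Nat.factorial ((m + k) i) : ℕ) : ℝ) := by
    have : 0 < ∏ i, Nat.factorial ((m + k) i) :=
      Finset.prod_pos fun i _ => Nat.factorial_pos _
    exact_mod_cast this
  have hreal : (Nat.factorial (n + (a + b) - 1) : ℝ) *
      ((∏ i, Nat.factorial (m i) : ℕ) * (∏ i, Nat.factorial (k i) : ℕ)) ≤
      2 ^ e * Nat.factorial (n + a - 1) * Nat.factorial (n + b - 1) *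
        ((∏ i, Nat.factorial ((m + k) i) : ℕ)) := by
    exact_mod_cast hnat
  rw [cnk, cnk, cnk, hsum, ← ha, ← hb]
  have hkey : (Nat.factorial (n + (a + b) - 1) : ℝ) /
        ((Nat.factorial (n - 1) : ℝ) * (∏ i, Nat.factorial ((m + k) i) : ℕ)) /
      ((Nat.factorial (n + a - 1) : ℝ) /
          ((Nat.factorial (n - 1) : ℝ) * (∏ i, Nat.factorial (m i) : ℕ)) *
        ((Nat.factorial (n + b - 1) : ℝ) /
          ((Nat.factorial (n - 1) : ℝ) * (∏ i, Nat.factorial (k i) : ℕ)))) =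
      (Nat.factorial (n - 1) : ℝ) * ((Nat.factorial (n + (a + b) - 1) : ℝ) *
        ((∏ i, Nat.factorial (m i) : ℕ) * (∏ i, Nat.factorial (k i) : ℕ))) /
      ((Nat.factorial (n + a - 1) : ℝ) * (Nat.factorial (n + b - 1) : ℝ) *
        (∏ i, Nat.factorial ((m + k) i) : ℕ)) := by
    field_simp
  rw [hkey, div_le_iff₀ (by positivity)]
  calc (Nat.factorial (n - 1) : ℝ) * ((Nat.factorial (n + (a + b) - 1) : ℝ) *
        ((∏ i, Nat.factorial (m i) : ℕ) * (∏ i, Nat.factorial (k i) : ℕ)))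
      ≤ (Nat.factorial (n - 1) : ℝ) *
          (2 ^ e * Nat.factorial (n + a - 1) * Nat.factorial (n + b - 1) *
            ((∏ i, Nat.factorial ((m + k) i) : ℕ))) :=
        mul_le_mul_of_nonneg_left hreal hF0.le
    _ = (Nat.factorial (n - 1) : ℝ) * 2 ^ e *
          ((Nat.factorial (n + a - 1) : ℝ) * (Nat.factorial (n + b - 1) : ℝ) *
            (∏ i, Nat.factorial ((m + k) i) : ℕ)) := by
        push_cast
        ring
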